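/- In any algebra (S,*,') satisfying the three axioms, the identity x'' = x'' * (x' * x) holds for all x in S. -/
import Mathlib


theorem stmt (S : Type*) (m : S → S → S) (i : S → S)
    (E1 : ∀ x, m (m x (i x)) x = x)
    (E2 : ∀ x y, m (m x (i x)) (m (i y) y) = m (m (i y) y) (m x (i x)))
    (E3 : ∀ x y z, m (m x y) z = m x (m y (i (i z)))) :
    ∀ x, i (i x) = m (i (i x)) (m (i x) x) := by
  intro x
  set A := m (i (i x)) (i (i (i x))) with hA
  calc i (i x)
      = m A (i (i x)) := (E1 (i (i x))).symm
    _ = m A (m A (i (i x))) := by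
        conv_lhs => rw [← E1 (i (i x))]
    _ = m (m A A) x := (E3 A A x).symm
    _ = m (m (m A (i (i x))) (i x)) x := by rw [E3 A (i (i x)) (i x)]
    _ = m (m A (i (i x))) (m (i x) (i (i x))) := E3 (m A (i (i x))) (i x) x
    _ = m (i (i x)) (m (i x) (i (i x))) := by rw [hA, E1 (i (i x))]
    _ = m (i (i x)) (m (i x) (m A (i (i x)))) := by
        conv_lhs => rhs; rhs; rw [← E1 (i (i x))]
    _ = m (i (i x)) (m (m (i x) A) x) := by rw [E3 (i x) A x]
    _ = m (i (i x)) (m (m (m (i x) (i (i x))) (i x)) x) := by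
        rw [hA, E3 (i x) (i (i x)) (i x)]
    _ = m (i (i x)) (m (i x) x) := by rw [E1 (i x)]
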